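/- arXiv:2410.08075 — 2 statements merged into one kernel-verified Lean document; each statement's English description precedes it below -/
import Mathlib

section
/- Equip T_n = 2^{[n]} ∖ {∅} with the tableau (Gale) order ⊑, where A ⊑ B iff #A ≥ #B and the k-th smallest element of A is ≤ the k-th smallest element of B for all k ≤ #B. Let C = [a,b] ⊆ [n] be an interval with C ≠ {n}. Then the unique element covering C in T_n is Ĉ = ((C ∖ {b}) ∪ {b+1}) ∩ [n]. -/
/-- The `k`-th smallest element of a finite set of naturals (0-indexed). -/
def nthSmall (A : Finset ℕ) (k : ℕ) : ℕ := (A.sort (· ≤ ·)).getD k 0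

/-- The tableau (Gale) order on finite sets of naturals. -/
def galeLe (A B : Finset ℕ) : Prop :=
  B.card ≤ A.card ∧ ∀ k < B.card, nthSmall A k ≤ nthSmall B k

/-- Strict tableau order. -/
def galeLt (A B : Finset ℕ) : Prop := galeLe A B ∧ A ≠ B

/-- `B` covers `A` in the poset `T_n` of nonempty subsets of `[n]` with the tableau
order: `A ⊏ B` and there is no element of `T_n` strictly between them. -/
def galeCovers (n : ℕ) (A B : Finset ℕ) : Prop :=
  galeLt A B ∧ ∀ E : Finset ℕ, E.Nonempty → E ⊆ Finset.Icc 1 n →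
    galeLt A E → galeLt E B → False

lemma sort_eq_of_toFinset {l : List ℕ} (hl : l.Pairwise (· < ·)) {S : Finset ℕ}
    (hS : S = l.toFinset) : S.sort (· ≤ ·) = l := by
  have hnd : l.Nodup := hl.nodup
  have hval : (S.val : Multiset ℕ) = ↑l := by
    rw [hS]
    simp only [List.toFinset, Multiset.toFinset_val]
    exact Multiset.dedup_eq_self.mpr (Multiset.coe_nodup.mpr hnd)
  refine List.Perm.eq_of_pairwise' (Finset.pairwise_sort _ _) ?_ (Multiset.coe_eq_coe.mp ?_)
  · exact hl.imp le_of_lt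
  · rw [Finset.sort_eq]; exact hval

lemma getD_range'_append (s m k x : ℕ) (h : k < m + 1) :
    ((List.range' s m ++ [x]).getD k 0) = if k < m then s + k else x := by
  rw [List.getD_eq_getElem _ _ (by simp; omega)]
  by_cases hk : k < m
  · rw [List.getElem_append_left (by simpa using hk)]
    simp [List.getElem_range', hk]
  · have : k = m := by omega
    subst this
    rw [List.getElem_append_right (by simp)]
    simp [hk]

lemma getD_range' (s m k : ℕ) (h : k < m) : (List.range' s m).getD k 0 = s + k := by
  rw [List.getD_eq_getElem _ _ (by simpa using h)]
  simp [List.getElem_range']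

lemma sorted_range' (s m : ℕ) : (List.range' s m).Pairwise (· < ·) := by
  simpa using List.pairwise_lt_range' (s := s) (n := m) 1 (by omega)

lemma sort_Icc (a b : ℕ) : (Finset.Icc a b).sort (· ≤ ·) = List.range' a (b + 1 - a) := by
  apply sort_eq_of_toFinset (sorted_range' _ _)
  ext x
  simp [List.mem_range'_1, Finset.mem_Icc]
  omega

lemma nthSmall_Icc (a b k : ℕ) (h : k < b + 1 - a) : nthSmall (Finset.Icc a b) k = a + k := by
  rw [nthSmall, sort_Icc, getD_range' _ _ _ h]

lemma card_Icc' (a b : ℕ) : (Finset.Icc a b).card = b + 1 - a := Nat.card_Icc a b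

lemma nthSmall_mem (D : Finset ℕ) {k : ℕ} (hk : k < D.card) : nthSmall D k ∈ D := by
  rw [nthSmall, List.getD_eq_getElem _ _ (by rwa [Finset.length_sort])]
  rw [← Finset.mem_sort (· ≤ ·)]
  exact List.getElem_mem _

lemma exists_nthSmall (D : Finset ℕ) {x : ℕ} (hx : x ∈ D) :
    ∃ k < D.card, nthSmall D k = x := by
  rw [← Finset.mem_sort (α := ℕ) (· ≤ ·)] at hx
  obtain ⟨i, hi, hix⟩ := List.getElem_of_mem hx
  exact ⟨i, by rwa [Finset.length_sort] at hi,
    by rw [nthSmall, List.getD_eq_getElem _ _ hi]; exact hix⟩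

lemma nthSmall_strictMono (D : Finset ℕ) {i j : ℕ} (hij : i < j) (hj : j < D.card) :
    nthSmall D i < nthSmall D j := by
  have hj' : j < (D.sort (· ≤ ·)).length := by rwa [Finset.length_sort]
  have hi' : i < (D.sort (· ≤ ·)).length := lt_trans hij hj'
  rw [nthSmall, nthSmall, List.getD_eq_getElem _ _ hi', List.getD_eq_getElem _ _ hj']
  exact (Finset.sortedLT_sort D).strictMono_get (show (⟨i, hi'⟩ : Fin _) < ⟨j, hj'⟩ from hij)

lemma nthSmall_add_le (D : Finset ℕ) {i j : ℕ} (hij : i ≤ j) (hj : j < D.card) :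
    nthSmall D i + (j - i) ≤ nthSmall D j := by
  induction j with
  | zero => simp [Nat.le_zero.mp hij]
  | succ j ih =>
    rcases Nat.lt_or_ge i (j + 1) with h | h
    · have h1 := ih (Nat.lt_succ_iff.mp h) (lt_trans (Nat.lt_succ_self j) hj)
      have h2 : nthSmall D j < nthSmall D (j + 1) := nthSmall_strictMono D (by omega) hj
      show nthSmall D i + (j + 1 - i) ≤ nthSmall D (j + 1)
      omega
    · have : i = j + 1 := le_antisymm hij h
      simp [this]

lemma pin (D : Finset ℕ) {a m : ℕ} (hm : D.card = m) (hm1 : 1 ≤ m)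
    (h1 : ∀ k < m, a + k ≤ nthSmall D k) (h2 : nthSmall D (m - 1) ≤ a + (m - 1)) :
    D = Finset.Icc a (a + (m - 1)) := by
  have key : ∀ k < m, nthSmall D k = a + k := by
    intro k hk
    have hadd := nthSmall_add_le D (show k ≤ m - 1 by omega) (by omega)
    have := h1 k hk
    have := h1 (m - 1) (by omega)
    omega
  apply Finset.eq_of_subset_of_card_le
  · intro x hx
    obtain ⟨k, hk, hkx⟩ := exists_nthSmall D hx
    rw [hm] at hk
    rw [Finset.mem_Icc, ← hkx, key k hk]
    omega
  · rw [card_Icc', hm]; omega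

lemma sort_injective {A B : Finset ℕ} (h : A.sort (· ≤ ·) = B.sort (· ≤ ·)) : A = B := by
  ext x
  rw [← Finset.mem_sort (α := ℕ) (· ≤ ·), ← Finset.mem_sort (α := ℕ) (· ≤ ·), h]

lemma gale_antisymm {A B : Finset ℕ} (h1 : galeLe A B) (h2 : galeLe B A) : A = B := by
  have hc : A.card = B.card := le_antisymm h2.1 h1.1
  apply sort_injective
  apply List.ext_getElem (by rw [Finset.length_sort, Finset.length_sort, hc])
  intro i hA hB
  rw [Finset.length_sort] at hA hB
  have e1 := h1.2 i hB
  have e2 := h2.2 i (hc ▸ hB)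
  have : nthSmall A i = nthSmall B i := le_antisymm e1 e2
  rwa [nthSmall, nthSmall, List.getD_eq_getElem _ _ (by rwa [Finset.length_sort]),
    List.getD_eq_getElem _ _ (by rwa [Finset.length_sort])] at this

lemma wrap (n : ℕ) (C Chat : Finset ℕ) (hne : Chat.Nonempty) (hsub : Chat ⊆ Finset.Icc 1 n)
    (hlt : galeLt C Chat)
    (hleast : ∀ D, D.Nonempty → D ⊆ Finset.Icc 1 n → galeLt C D → galeLe Chat D) :
    Chat.Nonempty ∧ Chat ⊆ Finset.Icc 1 n ∧ galeCovers n C Chat ∧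
      ∀ D : Finset ℕ, D.Nonempty → D ⊆ Finset.Icc 1 n → galeCovers n C D → D = Chat := by
  refine ⟨hne, hsub, ⟨hlt, ?_⟩, ?_⟩
  · intro E hE hEsub hCE hECh
    exact hECh.2 (gale_antisymm hECh.1 (hleast E hE hEsub hCE))
  · intro D hD hDsub hcov
    by_contra hne2
    exact hcov.2 Chat hne hsub hlt ⟨hleast D hD hDsub hcov.1, fun h => hne2 h.symm⟩

/-- Let `C = [a,b] ⊆ [n]` be an interval with `C ≠ {n}`. Then the
unique element covering `C` in `T_n` is `Ĉ = ((C ∖ {b}) ∪ {b+1}) ∩ [n]`. -/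
theorem stmt_6 (n a b : ℕ) (ha : 1 ≤ a) (hab : a ≤ b) (hbn : b ≤ n)
    (hne : Finset.Icc a b ≠ {n}) (C Chat : Finset ℕ)
    (hC : C = Finset.Icc a b)
    (hChat : Chat = ((C \ {b}) ∪ {b + 1}) ∩ Finset.Icc 1 n) :
    Chat.Nonempty ∧ Chat ⊆ Finset.Icc 1 n ∧ galeCovers n C Chat ∧
      ∀ D : Finset ℕ, D.Nonempty → D ⊆ Finset.Icc 1 n → galeCovers n C D → D = Chat := by
  set m := b + 1 - a with hm
  have hm1 : 1 ≤ m := by omega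
  have hCcard : C.card = m := by rw [hC, card_Icc']
  have nthC : ∀ k < m, nthSmall C k = a + k := fun k hk => by rw [hC, nthSmall_Icc a b k hk]
  rcases Nat.lt_or_ge b n with hbn' | hbn'
  -- Case b < n
  · set L : List ℕ := List.range' a (m - 1) ++ [b + 1] with hL
    have hLsorted : L.Pairwise (· < ·) := by
      rw [hL, List.pairwise_append]
      refine ⟨sorted_range' a (m - 1), by simp, ?_⟩
      intro x hx y hy
      simp at hy
      rw [List.mem_range'_1] at hx
      omega
    have hChatL : Chat = L.toFinset := by
      ext x
      rw [hChat, hC]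
      simp [hL, List.mem_range'_1, Finset.mem_Icc]
      omega
    have hsort : Chat.sort (· ≤ ·) = L := sort_eq_of_toFinset hLsorted hChatL
    have hChatcard : Chat.card = m := by
      rw [← Finset.length_sort (· ≤ ·), hsort, hL]
      simp; omega
    have nthChat : ∀ k < m, nthSmall Chat k = if k < m - 1 then a + k else b + 1 := by
      intro k hk
      rw [nthSmall, hsort, hL, getD_range'_append a (m - 1) k (b + 1) (by omega)]
    have hsub : Chat ⊆ Finset.Icc 1 n := by rw [hChat]; exact Finset.inter_subset_right
    have hnonempty : Chat.Nonempty := ⟨b + 1, by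
      rw [hChatL]; simp [hL]⟩
    have hlt : galeLt C Chat := by
      refine ⟨⟨by omega, ?_⟩, ?_⟩
      · intro k hk
        rw [hChatcard] at hk
        rw [nthC k hk, nthChat k hk]
        split <;> omega
      · intro h
        have : b + 1 ∈ C := by rw [h, hChatL]; simp [hL]
        rw [hC, Finset.mem_Icc] at this
        omega
    refine wrap n C Chat hnonempty hsub hlt ?_
    intro D hD hDsub hCD
    have hDcard : D.card ≤ m := hCcard ▸ hCD.1.1
    have hDlow : ∀ k < D.card, a + k ≤ nthSmall D k := by
      intro k hk
      have := hCD.1.2 k hk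
      rwa [nthC k (lt_of_lt_of_le hk hDcard)] at this
    refine ⟨by omega, ?_⟩
    intro k hk
    rw [nthChat k (lt_of_lt_of_le hk hDcard)]
    split
    · exact hDlow k hk
    · -- k = m - 1, D.card = m
      have hkm : k = m - 1 := by omega
      have hDm : D.card = m := by omega
      by_contra hcon
      push_neg at hcon
      have hDeq : D = Finset.Icc a (a + (m - 1)) :=
        pin D hDm hm1 (by simpa [hDm] using hDlow) (by rw [← hkm]; omega)
      have : D = C := by rw [hDeq, hC]; congr 1; omega
      exact hCD.2 this.symm
  -- Case b = n
  · have hbe : b = n := le_antisymm hbn hbn'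
    subst hbe
    have han : a < b := by
      rcases Nat.lt_or_ge a b with h | h
      · exact h
      · exfalso; apply hne; rw [le_antisymm hab h]; simp
    have hm2 : 2 ≤ m := by omega
    have hChatI : Chat = Finset.Icc a (b - 1) := by
      ext x
      rw [hChat, hC]
      simp [Finset.mem_Icc]
      omega
    have hChatcard : Chat.card = m - 1 := by rw [hChatI, card_Icc']; omega
    have nthChat : ∀ k < m - 1, nthSmall Chat k = a + k := by
      intro k hk
      rw [hChatI, nthSmall_Icc a (b - 1) k (by omega)]
    have hsub : Chat ⊆ Finset.Icc 1 b := by rw [hChat]; exact Finset.inter_subset_right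
    have hnonempty : Chat.Nonempty := ⟨a, by rw [hChatI, Finset.mem_Icc]; omega⟩
    have hlt : galeLt C Chat := by
      refine ⟨⟨by omega, ?_⟩, ?_⟩
      · intro k hk
        rw [hChatcard] at hk
        rw [nthC k (by omega), nthChat k hk]
      · intro h
        have : b ∈ Chat := by rw [← h, hC, Finset.mem_Icc]; omega
        rw [hChatI, Finset.mem_Icc] at this
        omega
    refine wrap b C Chat hnonempty hsub hlt ?_
    intro D hD hDsub hCD
    have hDcard : D.card ≤ m := hCcard ▸ hCD.1.1
    have hDlow : ∀ k < D.card, a + k ≤ nthSmall D k := by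
      intro k hk
      have := hCD.1.2 k hk
      rwa [nthC k (lt_of_lt_of_le hk hDcard)] at this
    have hDcard' : D.card ≤ m - 1 := by
      by_contra hcon
      have hDm : D.card = m := by omega
      have hmem := nthSmall_mem D (k := m - 1) (by omega)
      have hle : nthSmall D (m - 1) ≤ b := (Finset.mem_Icc.mp (hDsub hmem)).2
      have hDeq : D = Finset.Icc a (a + (m - 1)) :=
        pin D hDm hm1 (by simpa [hDm] using hDlow) (by omega)
      have : D = C := by rw [hDeq, hC]; congr 1; omega
      exact hCD.2 this.symm
    refine ⟨by omega, ?_⟩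
    intro k hk
    rw [nthChat k (by omega)]
    exact hDlow k hk
end

section
/- Equip T_n = 2^{[n]} ∖ {∅} with the tableau (Gale) order ⊑. Then T_n is a graded poset of rank binom(n+1, 2) − 1; that is, it has a unique minimal element [n] and unique maximal element {n}, and every maximal chain in T_n has exactly binom(n+1, 2) elements. -/
/-- A chain in the poset `T_n` of nonempty subsets of `[n]` under the tableau order. -/
def IsGaleChain (n : ℕ) (𝒞 : Finset (Finset ℕ)) : Prop :=
  (∀ A ∈ 𝒞, A.Nonempty ∧ A ⊆ Finset.Icc 1 n) ∧
    ∀ A ∈ 𝒞, ∀ B ∈ 𝒞, galeLe A B ∨ galeLe B A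

/-- A maximal chain in `T_n`. -/
def IsMaximalGaleChain (n : ℕ) (𝒞 : Finset (Finset ℕ)) : Prop :=
  IsGaleChain n 𝒞 ∧ ∀ 𝒟 : Finset (Finset ℕ), IsGaleChain n 𝒟 → 𝒞 ⊆ 𝒟 → 𝒟 = 𝒞

open Finset

/-- counting function -/
def Fcnt (A : Finset ℕ) (t : ℕ) : ℕ := (A.filter (· ≤ t)).card

lemma nthSmall_mem_s7 {A : Finset ℕ} {k : ℕ} (h : k < A.card) : nthSmall A k ∈ A := by
  have hl : k < (A.sort (· ≤ ·)).length := by rwa [Finset.length_sort]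
  rw [nthSmall, List.getD_eq_getElem (hn := hl)]
  exact (Finset.mem_sort _).1 (List.getElem_mem hl)

lemma nthSmall_strictMono_s7 {A : Finset ℕ} {k j : ℕ} (hkj : k < j) (h : j < A.card) :
    nthSmall A k < nthSmall A j := by
  have hl : j < (A.sort (· ≤ ·)).length := by rwa [Finset.length_sort]
  have hk : k < (A.sort (· ≤ ·)).length := lt_trans hkj hl
  rw [nthSmall, nthSmall, List.getD_eq_getElem (hn := hl), List.getD_eq_getElem (hn := hk)]
  exact A.sortedLT_sort.strictMono_get (show (⟨k, hk⟩ : Fin _) < ⟨j, hl⟩ from hkj)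

lemma nthSmall_mono {A : Finset ℕ} {k j : ℕ} (hkj : k ≤ j) (h : j < A.card) :
    nthSmall A k ≤ nthSmall A j := by
  rcases eq_or_lt_of_le hkj with rfl | h'
  · exact le_refl _
  · exact (nthSmall_strictMono_s7 h' h).le

lemma exists_nthSmall_s7 {A : Finset ℕ} {a : ℕ} (h : a ∈ A) :
    ∃ j < A.card, nthSmall A j = a := by
  have : a ∈ A.sort (· ≤ ·) := (Finset.mem_sort _).2 h
  obtain ⟨⟨j, hj⟩, hja⟩ := List.mem_iff_get.1 this
  exact ⟨j, by rwa [Finset.length_sort] at hj,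
    by rw [nthSmall, List.getD_eq_getElem (hn := hj)]; exact hja⟩

lemma Fcnt_le_card (A : Finset ℕ) (t : ℕ) : Fcnt A t ≤ A.card :=
  Finset.card_le_card (Finset.filter_subset _ _)

lemma Fcnt_mono (A : Finset ℕ) {s t : ℕ} (h : s ≤ t) : Fcnt A s ≤ Fcnt A t := by
  apply Finset.card_le_card
  intro a ha
  simp only [Finset.mem_filter] at *
  exact ⟨ha.1, le_trans ha.2 h⟩

/-- key: position vs counting -/
lemma nthSmall_le_iff {A : Finset ℕ} {k t : ℕ} (h : k < A.card) :
    nthSmall A k ≤ t ↔ k < Fcnt A t := by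
  constructor
  · intro hle
    have hsub : (Finset.range (k+1)).image (nthSmall A) ⊆ A.filter (· ≤ t) := by
      intro a ha
      simp only [Finset.mem_image, Finset.mem_range] at ha
      obtain ⟨j, hj, rfl⟩ := ha
      have hjc : j < A.card := lt_of_lt_of_le hj h
      exact Finset.mem_filter.2 ⟨nthSmall_mem_s7 hjc,
        le_trans (nthSmall_mono (Nat.lt_succ_iff.1 hj) h) hle⟩
    have hinj : Set.InjOn (nthSmall A) (Finset.range (k+1)) := by
      intro x hx y hy hxy
      simp only [Finset.coe_range, Set.mem_Iio] at hx hy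
      by_contra hne
      rcases Nat.lt_or_ge x y with h' | h'
      · exact absurd hxy (ne_of_lt (nthSmall_strictMono_s7 h' (lt_of_lt_of_le hy h)))
      · rcases lt_or_eq_of_le h' with h' | h'
        · exact absurd hxy.symm (ne_of_lt (nthSmall_strictMono_s7 h' (lt_of_lt_of_le hx h)))
        · exact hne h'.symm
    have := Finset.card_le_card hsub
    rwa [Finset.card_image_of_injOn hinj, Finset.card_range] at this
  · intro hlt
    by_contra hgt
    push_neg at hgt
    have hsub : A.filter (· ≤ t) ⊆ (Finset.range k).image (nthSmall A) := by
      intro a ha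
      rw [Finset.mem_filter] at ha
      obtain ⟨j, hj, rfl⟩ := exists_nthSmall_s7 ha.1
      refine Finset.mem_image.2 ⟨j, Finset.mem_range.2 ?_, rfl⟩
      by_contra hjk
      push_neg at hjk
      exact absurd ha.2 (not_le.2 (lt_of_lt_of_le hgt (nthSmall_mono hjk hj)))
    have := Finset.card_le_card hsub
    have h2 : ((Finset.range k).image (nthSmall A)).card ≤ k := by
      exact le_trans (Finset.card_image_le) (le_of_eq (Finset.card_range k))
    unfold Fcnt at hlt
    omega

def Dom (A B : Finset ℕ) : Prop := ∀ t, Fcnt B t ≤ Fcnt A t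

lemma Fcnt_eq_card {A : Finset ℕ} {n t : ℕ} (hA : ∀ a ∈ A, a ≤ n) (ht : n ≤ t) :
    Fcnt A t = A.card := by
  unfold Fcnt
  rw [Finset.filter_true_of_mem (fun a ha => le_trans (hA a ha) ht)]

lemma galeLe_iff_dom {A B : Finset ℕ} {n : ℕ} (hB : ∀ b ∈ B, b ≤ n) :
    galeLe A B ↔ Dom A B := by
  constructor
  · rintro ⟨hcard, hle⟩ t
    set j := Fcnt B t with hj
    rcases Nat.eq_zero_or_pos j with h0 | hpos
    · omega
    have hjB : j ≤ B.card := Fcnt_le_card B t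
    have h1 : nthSmall B (j-1) ≤ t := (nthSmall_le_iff (by omega)).2 (by omega)
    have h2 : nthSmall A (j-1) ≤ t :=
      le_trans (hle (j-1) (by omega)) h1
    have := (nthSmall_le_iff (k := j-1) (A := A) (by omega)).1 h2
    omega
  · intro hd
    have hcard : B.card ≤ A.card := by
      have h1 : Fcnt B n = B.card := Fcnt_eq_card hB (le_refl n)
      have := hd n
      have := Fcnt_le_card A n
      omega
    refine ⟨hcard, fun k hk => ?_⟩
    have hkA : k < A.card := lt_of_lt_of_le hk hcard
    set t := nthSmall B k with ht
    have h1 : k < Fcnt B t := (nthSmall_le_iff hk).1 (le_refl _)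
    exact (nthSmall_le_iff hkA).2 (lt_of_lt_of_le h1 (hd t))

lemma Fcnt_succ (A : Finset ℕ) (s : ℕ) :
    Fcnt A (s+1) = Fcnt A s + if s+1 ∈ A then 1 else 0 := by
  unfold Fcnt
  have : A.filter (· ≤ s+1) = (A.filter (· ≤ s)) ∪ (A.filter (· = s+1)) := by
    ext a
    simp only [Finset.mem_union, Finset.mem_filter]
    constructor
    · rintro ⟨ha, hle⟩
      rcases Nat.lt_or_ge a (s+1) with h | h
      · exact Or.inl ⟨ha, by omega⟩
      · exact Or.inr ⟨ha, by omega⟩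
    · rintro (⟨ha, hle⟩ | ⟨ha, he⟩)
      · exact ⟨ha, by omega⟩
      · exact ⟨ha, by omega⟩
  rw [this, Finset.card_union_of_disjoint]
  · congr 1
    by_cases h : s+1 ∈ A
    · rw [if_pos h]
      rw [Finset.filter_eq']
      rw [if_pos h, Finset.card_singleton]
    · rw [if_neg h]
      rw [Finset.filter_eq']
      rw [if_neg h, Finset.card_empty]
  · rw [Finset.disjoint_left]
    intro a ha hb
    simp only [Finset.mem_filter] at ha hb
    omega

lemma Fcnt_zero {A : Finset ℕ} {n : ℕ} (hA : A ⊆ Finset.Icc 1 n) : Fcnt A 0 = 0 := by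
  unfold Fcnt
  rw [Finset.card_eq_zero]
  rw [Finset.filter_eq_empty_iff]
  intro a ha
  have := hA ha
  rw [Finset.mem_Icc] at this
  omega

lemma Fcnt_succ_le (A : Finset ℕ) (s : ℕ) : Fcnt A (s+1) ≤ Fcnt A s + 1 := by
  rw [Fcnt_succ]; split <;> omega

lemma mem_iff_Fcnt {A : Finset ℕ} (s : ℕ) : s+1 ∈ A ↔ Fcnt A s < Fcnt A (s+1) := by
  rw [Fcnt_succ]; split <;> simp_all

lemma eq_of_Fcnt_eq {A B : Finset ℕ} {n : ℕ} (hA : A ⊆ Finset.Icc 1 n)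
    (hB : B ⊆ Finset.Icc 1 n) (h : ∀ t, Fcnt A t = Fcnt B t) : A = B := by
  ext a
  rcases Nat.eq_zero_or_pos a with rfl | hpos
  · constructor
    · intro h'; have := hA h'; rw [Finset.mem_Icc] at this; omega
    · intro h'; have := hB h'; rw [Finset.mem_Icc] at this; omega
  · obtain ⟨s, rfl⟩ : ∃ s, a = s + 1 := ⟨a - 1, by omega⟩
    rw [mem_iff_Fcnt, mem_iff_Fcnt, h, h]

/-- rank function -/
def Rk (n : ℕ) (A : Finset ℕ) : ℕ := ∑ t ∈ Finset.Icc 1 n, Fcnt A t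

lemma Rk_mono {n : ℕ} {A B : Finset ℕ} (h : Dom A B) : Rk n B ≤ Rk n A :=
  Finset.sum_le_sum fun t _ => h t

lemma Rk_strict {n : ℕ} {A B : Finset ℕ} (hA : A ⊆ Finset.Icc 1 n)
    (hB : B ⊆ Finset.Icc 1 n) (h : Dom A B) (hne : A ≠ B) : Rk n B < Rk n A := by
  have hex : ∃ t ∈ Finset.Icc 1 n, Fcnt B t < Fcnt A t := by
    by_contra hc
    push_neg at hc
    apply hne
    apply eq_of_Fcnt_eq hA hB
    intro t
    rcases le_or_gt t n with ht | ht
    · rcases Nat.eq_zero_or_pos t with rfl | hpos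
      · rw [Fcnt_zero hA, Fcnt_zero hB]
      · exact le_antisymm (hc t (Finset.mem_Icc.2 ⟨hpos, ht⟩)) (h t)
    · have h1 : Fcnt A t = A.card := Fcnt_eq_card (fun a ha => (Finset.mem_Icc.1 (hA ha)).2) ht.le
      have h2 : Fcnt B t = B.card := Fcnt_eq_card (fun a ha => (Finset.mem_Icc.1 (hB ha)).2) ht.le
      have h3 : Fcnt A n = A.card := Fcnt_eq_card (fun a ha => (Finset.mem_Icc.1 (hA ha)).2) le_rfl
      have h4 : Fcnt B n = B.card := Fcnt_eq_card (fun a ha => (Finset.mem_Icc.1 (hB ha)).2) le_rfl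
      have h5 := h n
      have h6 : n ∈ Finset.Icc 1 n ∨ n = 0 := by
        rcases Nat.eq_zero_or_pos n with rfl | hp
        · exact Or.inr rfl
        · exact Or.inl (Finset.mem_Icc.2 ⟨hp, le_rfl⟩)
      rcases h6 with h6 | rfl
      · have := hc n h6; omega
      · have hA' : A = ∅ := Finset.subset_empty.1 (by simpa using hA)
        have hB' : B = ∅ := Finset.subset_empty.1 (by simpa using hB)
        rw [hA', hB']
  obtain ⟨t, ht, hlt⟩ := hex
  exact Finset.sum_lt_sum (fun i _ => h i) ⟨t, ht, hlt⟩

lemma Fcnt_erase {A : Finset ℕ} {a : ℕ} (ha : a ∈ A) (t : ℕ) :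
    Fcnt (A.erase a) t = Fcnt A t - (if a ≤ t then 1 else 0) := by
  unfold Fcnt
  rw [Finset.filter_erase]
  by_cases h : a ≤ t
  · have hmem : a ∈ A.filter (· ≤ t) := Finset.mem_filter.2 ⟨ha, h⟩
    rw [if_pos h, Finset.card_erase_of_mem hmem]
  · rw [if_neg h, Nat.sub_zero, Finset.erase_eq_of_notMem]
    intro hc; exact h (Finset.mem_filter.1 hc).2

lemma Fcnt_insert {A : Finset ℕ} {a : ℕ} (ha : a ∉ A) (t : ℕ) :
    Fcnt (insert a A) t = Fcnt A t + (if a ≤ t then 1 else 0) := by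
  unfold Fcnt
  rw [Finset.filter_insert]
  by_cases h : a ≤ t
  · rw [if_pos h, if_pos h,
      Finset.card_insert_of_notMem (fun hc => ha (Finset.mem_filter.1 hc).1)]
  · rw [if_neg h, if_neg h, Nat.add_zero]

lemma Fcnt_pos {A : Finset ℕ} {a t : ℕ} (ha : a ∈ A) (h : a ≤ t) : 1 ≤ Fcnt A t :=
  Finset.card_pos.2 ⟨a, Finset.mem_filter.2 ⟨ha, h⟩⟩

lemma cover_step {n : ℕ} {A B : Finset ℕ}
    (hAn : A ⊆ Finset.Icc 1 n)
    (hB : B.Nonempty) (hBn : B ⊆ Finset.Icc 1 n)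
    (hd : Dom A B) (hne : A ≠ B) :
    ∃ C : Finset ℕ, C.Nonempty ∧ C ⊆ Finset.Icc 1 n ∧ Dom A C ∧ Dom C B ∧
      Rk n C + 1 = Rk n A := by
  have hAle : ∀ a ∈ A, a ≤ n := fun a ha => (Finset.mem_Icc.1 (hAn ha)).2
  have hBle : ∀ b ∈ B, b ≤ n := fun b hb => (Finset.mem_Icc.1 (hBn hb)).2
  have hex : ∃ t, Fcnt B t < Fcnt A t := by
    by_contra hc
    push_neg at hc
    exact hne (eq_of_Fcnt_eq hAn hBn fun t => le_antisymm (hc t) (hd t))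
  set t₀ := Nat.find hex with ht0def
  have ht0 : Fcnt B t₀ < Fcnt A t₀ := Nat.find_spec hex
  have ht0pos : 1 ≤ t₀ := by
    rcases Nat.eq_zero_or_pos t₀ with h0 | h; swap
    · exact h
    · rw [h0] at ht0
      rw [Fcnt_zero hAn] at ht0
      omega
  obtain ⟨s₀, hs₀⟩ : ∃ s₀, t₀ = s₀ + 1 := ⟨t₀ - 1, by omega⟩
  have heqs₀ : Fcnt A s₀ = Fcnt B s₀ := by
    have h1 := hd s₀
    have h2 : ¬ (Fcnt B s₀ < Fcnt A s₀) := Nat.find_min hex (by omega)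
    omega
  have ht0mem : t₀ ∈ A := by
    rw [hs₀, mem_iff_Fcnt]
    have h1 : Fcnt B s₀ ≤ Fcnt B (s₀+1) := Fcnt_mono B (by omega)
    have h2 : Fcnt A (s₀+1) ≤ Fcnt A s₀ + 1 := Fcnt_succ_le A s₀
    rw [hs₀] at ht0
    omega
  have hexD : ∃ d, t₀ + d + 1 ∉ A := by
    refine ⟨n, fun hc => ?_⟩
    have := hAle _ hc
    omega
  set D := Nat.find hexD with hDdef
  set u := t₀ + D with hudef
  have hrun : ∀ e ≤ D, t₀ + e ∈ A := by
    intro e he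
    rcases Nat.eq_zero_or_pos e with rfl | hpos
    · simpa using ht0mem
    · obtain ⟨d, rfl⟩ : ∃ d, e = d + 1 := ⟨e - 1, by omega⟩
      have := Nat.find_min hexD (m := d) (by omega)
      rw [not_not] at this
      exact this
  have humem : u ∈ A := hrun D le_rfl
  have hun : u ≤ n := hAle _ humem
  have hunot : u + 1 ∉ A := Nat.find_spec hexD
  have hinv : ∀ e ≤ D, Fcnt B (t₀ + e) < Fcnt A (t₀ + e) := by
    intro e
    induction e with
    | zero => intro _; simpa using ht0
    | succ d ih =>
      intro hd1
      have h1 := ih (by omega)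
      have hmem : t₀ + d + 1 ∈ A := hrun (d+1) hd1
      have h2 : Fcnt A (t₀ + d + 1) = Fcnt A (t₀ + d) + 1 := by
        rw [Fcnt_succ, if_pos hmem]
      have h3 : Fcnt B (t₀ + d + 1) ≤ Fcnt B (t₀ + d) + 1 := Fcnt_succ_le B _
      have h4 : t₀ + (d + 1) = t₀ + d + 1 := by omega
      rw [h4]
      omega
  have hFu : Fcnt B u < Fcnt A u := hinv D le_rfl
  have huIcc : u ∈ Finset.Icc 1 n := Finset.mem_Icc.2 ⟨by omega, hun⟩
  have hFApos : 1 ≤ Fcnt A u := Fcnt_pos humem le_rfl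
  -- the rank sum splitting, done abstractly for the chosen C
  have rkC : ∀ C : Finset ℕ, (∀ t ∈ Finset.Icc 1 n, t ≠ u → Fcnt C t = Fcnt A t) →
      Fcnt C u + 1 = Fcnt A u → Rk n C + 1 = Rk n A := by
    intro C hCt hCu
    unfold Rk
    rw [← Finset.sum_erase_add _ _ huIcc, ← Finset.sum_erase_add _ _ huIcc]
    have : ∑ t ∈ (Finset.Icc 1 n).erase u, Fcnt C t
        = ∑ t ∈ (Finset.Icc 1 n).erase u, Fcnt A t := by
      apply Finset.sum_congr rfl
      intro t ht
      exact hCt t (Finset.mem_of_mem_erase ht) (Finset.ne_of_mem_erase ht)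
    omega
  rcases eq_or_lt_of_le hun with hueq | hult
  · -- u = n : C = A.erase n
    refine ⟨A.erase u, ?_, ?_, ?_, ?_, ?_⟩
    · rw [← Finset.card_pos, Finset.card_erase_of_mem humem]
      have h1 : Fcnt B n = B.card := Fcnt_eq_card hBle le_rfl
      have h2 : Fcnt A n = A.card := Fcnt_eq_card hAle le_rfl
      have h3 : 1 ≤ B.card := Finset.card_pos.2 hB
      rw [hueq] at hFu
      omega
    · exact fun x hx => hAn (Finset.mem_of_mem_erase hx)
    · intro t
      rw [Fcnt_erase humem]
      split <;> omega
    · intro t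
      rw [Fcnt_erase humem]
      by_cases h : u ≤ t
      · rw [if_pos h]
        have h1 : Fcnt B t = B.card := Fcnt_eq_card hBle (by omega)
        have h2 : Fcnt B u = B.card := Fcnt_eq_card hBle (by omega)
        have h3 : Fcnt A u ≤ Fcnt A t := Fcnt_mono A h
        omega
      · rw [if_neg h]
        exact hd t
    · apply rkC
      · intro t ht hne'
        rw [Fcnt_erase humem, if_neg, Nat.sub_zero]
        have := Finset.mem_Icc.1 ht
        omega
      · rw [Fcnt_erase humem, if_pos le_rfl]
        omega
  · -- u < n : C = insert (u+1) (A.erase u)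
    have hu1 : u + 1 ∉ A.erase u := fun hc => hunot (Finset.mem_of_mem_erase hc)
    have hF : ∀ t, Fcnt (insert (u+1) (A.erase u)) t
        = Fcnt A t - (if u ≤ t then 1 else 0) + (if u + 1 ≤ t then 1 else 0) := by
      intro t
      rw [Fcnt_insert hu1, Fcnt_erase humem]
    refine ⟨insert (u+1) (A.erase u), ⟨u+1, Finset.mem_insert_self _ _⟩, ?_, ?_, ?_, ?_⟩
    · intro x hx
      rcases Finset.mem_insert.1 hx with rfl | hx'
      · exact Finset.mem_Icc.2 ⟨by omega, by omega⟩
      · exact hAn (Finset.mem_of_mem_erase hx')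
    · intro t
      rw [hF]
      have := Fcnt_pos humem (le_refl u)
      have : u ≤ t → 1 ≤ Fcnt A t := fun h => Fcnt_pos humem h
      split_ifs <;> [skip; skip; skip; skip] <;>
        first
          | omega
          | (have h1 := this (by omega); omega)
    · intro t
      rw [hF]
      by_cases h1 : t = u
      · subst h1
        rw [if_pos le_rfl, if_neg (by omega)]
        omega
      · by_cases h2 : u ≤ t
        · rw [if_pos h2, if_pos (by omega)]
          have := hd t
          have := Fcnt_pos humem h2
          omega
        · rw [if_neg h2, if_neg (by omega)]
          have := hd t
          omega
    · apply rkC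
      · intro t ht hne'
        rw [hF]
        by_cases h2 : u ≤ t
        · rw [if_pos h2, if_pos (by omega)]
          have := Fcnt_pos humem h2
          omega
        · rw [if_neg h2, if_neg (by omega)]
          omega
      · rw [hF, if_pos le_rfl, if_neg (by omega)]
        omega

lemma galeLe_trans {n : ℕ} {A B C : Finset ℕ} (hB : B ⊆ Finset.Icc 1 n)
    (hC : C ⊆ Finset.Icc 1 n) (h1 : galeLe A B) (h2 : galeLe B C) : galeLe A C := by
  have hBle : ∀ b ∈ B, b ≤ n := fun b hb => (Finset.mem_Icc.1 (hB hb)).2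
  have hCle : ∀ c ∈ C, c ≤ n := fun c hc => (Finset.mem_Icc.1 (hC hc)).2
  rw [galeLe_iff_dom hBle] at h1
  rw [galeLe_iff_dom hCle] at h2
  rw [galeLe_iff_dom hCle]
  exact fun t => le_trans (h2 t) (h1 t)

lemma galeLe_refl (A : Finset ℕ) : galeLe A A := ⟨le_rfl, fun _ _ => le_rfl⟩

lemma Fcnt_Icc {n t : ℕ} (ht : t ≤ n) : Fcnt (Finset.Icc 1 n) t = t := by
  unfold Fcnt
  have : (Finset.Icc 1 n).filter (· ≤ t) = Finset.Icc 1 t := by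
    ext a
    simp only [Finset.mem_filter, Finset.mem_Icc]
    omega
  rw [this, Nat.card_Icc]
  omega

lemma Fcnt_singleton (n t : ℕ) : Fcnt {n} t = if n ≤ t then 1 else 0 := by
  unfold Fcnt
  rw [Finset.filter_singleton]
  split <;> simp

lemma Rk_bot (n : ℕ) : Rk n (Finset.Icc 1 n) = ∑ t ∈ Finset.Icc 1 n, t :=
  Finset.sum_congr rfl fun t ht => Fcnt_Icc (Finset.mem_Icc.1 ht).2

lemma Rk_top {n : ℕ} (hn : 1 ≤ n) : Rk n {n} = 1 := by
  unfold Rk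
  rw [Finset.sum_eq_single n]
  · rw [Fcnt_singleton, if_pos le_rfl]
  · intro t ht hne
    rw [Fcnt_singleton, if_neg]
    have := Finset.mem_Icc.1 ht
    omega
  · intro h
    exact absurd (Finset.mem_Icc.2 ⟨hn, le_rfl⟩) h

lemma gauss (n : ℕ) : ∑ t ∈ Finset.Icc 1 n, t = (n+1).choose 2 := by
  have h2 := Finset.sum_range_id_mul_two (n+1)
  have h3 : Finset.range (n+1) = insert 0 (Finset.Icc 1 n) := by
    ext a
    simp only [Finset.mem_range, Finset.mem_insert, Finset.mem_Icc]
    omega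
  rw [h3, Finset.sum_insert (by simp)] at h2
  rw [Nat.choose_two_right]
  omega

lemma dom_bot {n : ℕ} {A : Finset ℕ} (hA : A ⊆ Finset.Icc 1 n) :
    Dom (Finset.Icc 1 n) A := fun t =>
  Finset.card_le_card (Finset.filter_subset_filter _ hA)

lemma dom_top {n : ℕ} {A : Finset ℕ} (hA : A.Nonempty) (hAn : A ⊆ Finset.Icc 1 n) :
    Dom A {n} := by
  intro t
  rw [Fcnt_singleton]
  split
  · obtain ⟨a, ha⟩ := hA
    exact Fcnt_pos ha (le_trans (Finset.mem_Icc.1 (hAn ha)).2 (by assumption))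
  · exact Nat.zero_le _

/-- `T_n` is a graded poset of rank `binom(n+1,2) − 1`: it has `[n]`
as unique bottom element and `{n}` as unique top element, and every maximal chain has
exactly `binom(n+1,2)` elements. -/
theorem stmt_7 (n : ℕ) (hn : 1 ≤ n) :
    (∀ A : Finset ℕ, A.Nonempty → A ⊆ Finset.Icc 1 n →
      galeLe (Finset.Icc 1 n) A ∧ galeLe A {n}) ∧
    ∀ 𝒞 : Finset (Finset ℕ), IsMaximalGaleChain n 𝒞 → 𝒞.card = (n + 1).choose 2 := by
  have hle : ∀ A : Finset ℕ, A ⊆ Finset.Icc 1 n → ∀ a ∈ A, a ≤ n :=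
    fun A hA a ha => (Finset.mem_Icc.1 (hA ha)).2
  have part1 : ∀ A : Finset ℕ, A.Nonempty → A ⊆ Finset.Icc 1 n →
      galeLe (Finset.Icc 1 n) A ∧ galeLe A {n} := by
    intro A hA hAn
    constructor
    · exact (galeLe_iff_dom (hle A hAn)).2 (dom_bot hAn)
    · exact (galeLe_iff_dom (n := n) (fun b hb => by simp only [Finset.mem_singleton] at hb; omega)).2
        (dom_top hA hAn)
  refine ⟨part1, ?_⟩
  rintro 𝒞 ⟨⟨hmem, hcomp⟩, hmax⟩
  set N := ∑ t ∈ Finset.Icc 1 n, t with hNdef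
  have hbotne : (Finset.Icc 1 n).Nonempty := ⟨1, Finset.mem_Icc.2 ⟨le_rfl, hn⟩⟩
  have htopsub : ({n} : Finset ℕ) ⊆ Finset.Icc 1 n := by
    simp [Finset.singleton_subset_iff, Finset.mem_Icc, hn]
  -- translate galeLe to Dom for members
  have toDom : ∀ X Y : Finset ℕ, Y ⊆ Finset.Icc 1 n → galeLe X Y → Dom X Y :=
    fun X Y hY h => (galeLe_iff_dom (hle Y hY)).1 h
  have toGale : ∀ X Y : Finset ℕ, Y ⊆ Finset.Icc 1 n → Dom X Y → galeLe X Y :=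
    fun X Y hY h => (galeLe_iff_dom (hle Y hY)).2 h
  -- insertion principle
  have hins : ∀ X : Finset ℕ, X.Nonempty → X ⊆ Finset.Icc 1 n →
      (∀ Y ∈ 𝒞, galeLe X Y ∨ galeLe Y X) → X ∈ 𝒞 := by
    intro X hX hXn hcompX
    have hchain : IsGaleChain n (insert X 𝒞) := by
      constructor
      · intro A hA
        rcases Finset.mem_insert.1 hA with rfl | h
        · exact ⟨hX, hXn⟩
        · exact hmem A h
      · intro A hA B hB
        rcases Finset.mem_insert.1 hA with rfl | hA' <;>
          rcases Finset.mem_insert.1 hB with rfl | hB'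
        · exact Or.inl (galeLe_refl _)
        · exact hcompX B hB'
        · exact (hcompX A hA').symm
        · exact hcomp A hA' B hB'
    have := hmax _ hchain (Finset.subset_insert _ _)
    rw [← this]
    exact Finset.mem_insert_self _ _
  have hbot : Finset.Icc 1 n ∈ 𝒞 := by
    apply hins _ hbotne (subset_refl _)
    intro Y hY
    exact Or.inl ((part1 Y (hmem Y hY).1 (hmem Y hY).2).1)
  have htop : ({n} : Finset ℕ) ∈ 𝒞 := by
    apply hins _ (Finset.singleton_nonempty n) htopsub
    intro Y hY
    exact Or.inr ((part1 Y (hmem Y hY).1 (hmem Y hY).2).2)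
  have hRbot : Rk n (Finset.Icc 1 n) = N := Rk_bot n
  have hRtop : Rk n ({n} : Finset ℕ) = 1 := Rk_top hn
  have hbounds : ∀ X ∈ 𝒞, 1 ≤ Rk n X ∧ Rk n X ≤ N := by
    intro X hX
    obtain ⟨hXne, hXn⟩ := hmem X hX
    constructor
    · rw [← hRtop]; exact Rk_mono (n := n) (dom_top hXne hXn)
    · rw [← hRbot]; exact Rk_mono (n := n) (dom_bot hXn)
  -- surjectivity of Rk onto Icc 1 N
  have hsurj : ∀ r, 1 ≤ r → r ≤ N → ∃ X ∈ 𝒞, Rk n X = r := by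
    intro r h1 h2
    by_contra hc
    push_neg at hc
    have hPne : (𝒞.filter (fun X => r < Rk n X)).Nonempty := by
      refine ⟨Finset.Icc 1 n, Finset.mem_filter.2 ⟨hbot, ?_⟩⟩
      have := hc _ hbot
      omega
    obtain ⟨A, hAP, hAmin⟩ := Finset.exists_min_image _ (Rk n) hPne
    have hQne : (𝒞.filter (fun X => Rk n X < r)).Nonempty := by
      refine ⟨{n}, Finset.mem_filter.2 ⟨htop, ?_⟩⟩
      have := hc _ htop
      omega
    obtain ⟨B, hBQ, hBmax⟩ := Finset.exists_max_image _ (Rk n) hQne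
    rw [Finset.mem_filter] at hAP hBQ
    obtain ⟨hA𝒞, hAr⟩ := hAP
    obtain ⟨hB𝒞, hBr⟩ := hBQ
    obtain ⟨hAne, hAn⟩ := hmem A hA𝒞
    obtain ⟨hBne, hBn⟩ := hmem B hB𝒞
    have hdAB : Dom A B := by
      rcases hcomp A hA𝒞 B hB𝒞 with h | h
      · exact toDom _ _ hBn h
      · have := Rk_mono (n := n) (toDom _ _ hAn h)
        omega
    have hneAB : A ≠ B := fun h => by rw [h] at hAr; omega
    obtain ⟨C, hCne, hCn, hdAC, hdCB, hRkC⟩ := cover_step hAn hBne hBn hdAB hneAB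
    have hRA : Rk n C ≤ Rk n A := Rk_mono (n := n) hdAC
    have hgCB : galeLe C B := toGale _ _ hBn hdCB
    have hgAC : galeLe A C := toGale _ _ hCn hdAC
    have hcompC : ∀ Y ∈ 𝒞, galeLe C Y ∨ galeLe Y C := by
      intro Y hY
      obtain ⟨hYne, hYn⟩ := hmem Y hY
      rcases hcomp A hA𝒞 Y hY with h | h
      · -- galeLe A Y
        have hdAY := toDom _ _ hYn h
        have hYA : Rk n Y ≤ Rk n A := Rk_mono (n := n) hdAY
        rcases lt_or_gt_of_ne (hc Y hY) with hlt | hgt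
        · -- Rk Y < r : Y in Q
          have hYB : Rk n Y ≤ Rk n B :=
            hBmax Y (Finset.mem_filter.2 ⟨hY, hlt⟩)
          rcases hcomp B hB𝒞 Y hY with hBY | hYB'
          · exact Or.inl (galeLe_trans hBn hYn hgCB hBY)
          · have hBY' : Rk n B ≤ Rk n Y := Rk_mono (n := n) (toDom _ _ hBn hYB')
            have : Y = B := by
              by_contra hne'
              have := Rk_strict hYn hBn (toDom _ _ hBn hYB') hne'
              omega
            rw [this]
            exact Or.inl hgCB
        · -- r < Rk Y : Y in P
          have hAY : Rk n A ≤ Rk n Y :=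
            hAmin Y (Finset.mem_filter.2 ⟨hY, hgt⟩)
          have : Y = A := by
            by_contra hne'
            have := Rk_strict hAn hYn hdAY (fun h' => hne' h'.symm)
            omega
          rw [this]
          exact Or.inr hgAC
      · exact Or.inr (galeLe_trans hAn hCn h hgAC)
    have hC𝒞 := hins C hCne hCn hcompC
    have hCr := hc C hC𝒞
    have hCP : r < Rk n C := by omega
    have := hAmin C (Finset.mem_filter.2 ⟨hC𝒞, hCP⟩)
    omega
  -- injectivity of Rk on 𝒞
  have hinj : Set.InjOn (Rk n) ↑𝒞 := by
    intro X hX Y hY hXY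
    rw [Finset.mem_coe] at hX hY
    by_contra hne
    obtain ⟨hXne, hXn⟩ := hmem X hX
    obtain ⟨hYne, hYn⟩ := hmem Y hY
    rcases hcomp X hX Y hY with h | h
    · have := Rk_strict hXn hYn (toDom _ _ hYn h) hne
      omega
    · have := Rk_strict hYn hXn (toDom _ _ hXn h) (fun h' => hne h'.symm)
      omega
  have himg : 𝒞.image (Rk n) = Finset.Icc 1 N := by
    ext r
    simp only [Finset.mem_image, Finset.mem_Icc]
    constructor
    · rintro ⟨X, hX, rfl⟩
      exact hbounds X hX
    · rintro ⟨h1, h2⟩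
      obtain ⟨X, hX, hXr⟩ := hsurj r h1 h2
      exact ⟨X, hX, hXr⟩
  have hcard := Finset.card_image_of_injOn hinj
  rw [himg, Nat.card_Icc] at hcard
  have := gauss n
  omega
end
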